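/- Let q > 1 and a be integers. The number of primitive Dirichlet characters χ modulo q, weighted by χ(a), satisfies ∑*_{χ mod q} χ(a) = ∑_{c | gcd(q, a−1)} μ(q/c)·φ(c), where the star denotes summation over primitive characters modulo q, provided gcd(a,q)=1. -/

import Mathlib

open scoped Classical

open DirichletCharacter


lemma split_lemma {c d L : ℕ} [NeZero L] (hcL : c ∣ L) (hdL : d ∣ L) (hLcd : L ∣ c * d)
    (u : (ZMod L)ˣ)
    (hu : ZMod.unitsMap ((Nat.gcd_dvd_left c d).trans hcL) u = 1) :
    ∃ v w : (ZMod L)ˣ, u = v * w ∧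
      ZMod.unitsMap hcL v = 1 ∧ ZMod.unitsMap hdL w = 1 := by
  set x : ℤ := ((u : ZMod L).val : ℤ) with hxdef
  have hux : ((x : ZMod L)) = (u : ZMod L) := by
    rw [hxdef]; push_cast; simp [ZMod.natCast_val, ZMod.cast_id]
  have hcop : IsCoprime x (L : ℤ) :=
    Nat.isCoprime_iff_coprime.mpr (ZMod.val_coe_unit_coprime u)
  have hg1 : ((x : ℤ) : ZMod (Nat.gcd c d)) = 1 := by
    have h2 := congrArg Units.val hu
    rw [ZMod.unitsMap_def] at h2
    simp only [Units.coe_map, MonoidHom.coe_coe, Units.val_one] at h2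
    rw [← hux, map_intCast] at h2
    exact h2
  have hgdvd : ((Nat.gcd c d : ℤ)) ∣ x - 1 := by
    rw [← ZMod.intCast_zmod_eq_zero_iff_dvd]
    push_cast
    rw [sub_eq_zero, hg1]
  obtain ⟨m, hm⟩ := hgdvd
  set s := Int.gcdA c d * m with hsdef
  set t := Int.gcdB c d * m with htdef
  have key : x - 1 = c * s + d * t := by
    have hb := Int.gcd_eq_gcd_ab (c : ℤ) (d : ℤ)
    rw [Int.gcd_natCast_natCast] at hb
    rw [hm, hb, hsdef, htdef]; ring
  set y : ℤ := 1 + d * t with hydef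
  have hyx : y = x + (c : ℤ) * (-s) := by rw [hydef]; linarith [key]
  have hyc : IsCoprime y (c : ℤ) := by
    have h1 : IsCoprime x (c : ℤ) := hcop.of_isCoprime_of_dvd_right
      (Int.natCast_dvd_natCast.mpr hcL)
    rw [hyx]; exact h1.add_mul_left_left (-s)
  have hyd : IsCoprime y (d : ℤ) := (isCoprime_one_left).add_mul_left_left t
  have hyL : IsCoprime y (L : ℤ) := (hyc.mul_right hyd).of_isCoprime_of_dvd_right
    (Int.natCast_dvd_natCast.mpr hLcd)
  have hyunit : IsUnit ((y : ZMod L)) := by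
    obtain ⟨p, q', hpq⟩ := hyL
    refine IsUnit.of_mul_eq_one ((p : ZMod L)) ?_
    have h3 := congrArg (Int.cast : ℤ → ZMod L) hpq
    push_cast at h3
    rw [ZMod.natCast_self, mul_zero, add_zero, mul_comm] at h3
    exact h3
  have hyd1 : ((y : ℤ) : ZMod d) = 1 := by
    rw [hydef]; push_cast; simp
  have hyc1 : ((y : ℤ) : ZMod c) = ((x : ℤ) : ZMod c) := by
    have h4 : ((x - y : ℤ) : ZMod c) = 0 := by
      rw [ZMod.intCast_zmod_eq_zero_iff_dvd]
      exact ⟨s, by linarith [hyx]⟩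
    push_cast at h4
    rw [sub_eq_zero] at h4
    rw [h4]
  refine ⟨u * hyunit.unit⁻¹, hyunit.unit, by rw [inv_mul_cancel_right], ?_, ?_⟩
  · have hwc : ZMod.unitsMap hcL hyunit.unit = ZMod.unitsMap hcL u := by
      ext
      rw [ZMod.unitsMap_def]
      simp only [Units.coe_map, MonoidHom.coe_coe, IsUnit.unit_spec]
      rw [← hux, map_intCast, map_intCast, hyc1]
    rw [map_mul, map_inv, hwc, mul_inv_cancel]
  · ext
    rw [ZMod.unitsMap_def]
    simp only [Units.coe_map, MonoidHom.coe_coe, IsUnit.unit_spec, Units.val_one]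
    rw [map_intCast, hyd1]

lemma split_general {c d q : ℕ} [NeZero q] (hc : c ∣ q) (hd : d ∣ q)
    (u : (ZMod q)ˣ) (hu : ZMod.unitsMap ((Nat.gcd_dvd_left c d).trans hc) u = 1) :
    ∃ v w : (ZMod q)ˣ, u = v * w ∧
      ZMod.unitsMap hc v = 1 ∧ ZMod.unitsMap hd w = 1 := by
  have hL : Nat.lcm c d ∣ q := Nat.lcm_dvd hc hd
  haveI : NeZero (Nat.lcm c d) := ⟨fun h => NeZero.ne q (Nat.eq_zero_of_zero_dvd (h ▸ hL))⟩
  set ub := ZMod.unitsMap hL u with hub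
  have hub1 : ZMod.unitsMap ((Nat.gcd_dvd_left c d).trans (Nat.dvd_lcm_left c d)) ub = 1 := by
    rw [hub, ← MonoidHom.comp_apply, ZMod.unitsMap_comp]
    exact hu
  obtain ⟨vb, wb, huvw, hvb, hwb⟩ := split_lemma (Nat.dvd_lcm_left c d)
    (Nat.dvd_lcm_right c d) (Nat.lcm_dvd_mul c d) ub hub1
  obtain ⟨w, hw⟩ := ZMod.unitsMap_surjective hL wb
  refine ⟨u * w⁻¹, w, by rw [inv_mul_cancel_right], ?_, ?_⟩
  · have h1 : ZMod.unitsMap hc u = ZMod.unitsMap (Nat.dvd_lcm_left c d) ub := by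
      rw [hub, ← MonoidHom.comp_apply, ZMod.unitsMap_comp]
    have h2 : ZMod.unitsMap hc w = ZMod.unitsMap (Nat.dvd_lcm_left c d) wb := by
      rw [← hw, ← MonoidHom.comp_apply, ZMod.unitsMap_comp]
    rw [map_mul, map_inv, h1, h2, huvw, map_mul, hvb, one_mul, mul_inv_cancel]
  · rw [← hwb, ← hw, ← MonoidHom.comp_apply, ZMod.unitsMap_comp]

lemma factorsThrough_gcd {q : ℕ} [NeZero q] {χ : DirichletCharacter ℂ q} {c d : ℕ}
    (hc : χ.FactorsThrough c) (hd : χ.FactorsThrough d) :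
    χ.FactorsThrough (Nat.gcd c d) := by
  have hcq := hc.dvd
  have hdq := hd.dvd
  rw [factorsThrough_iff_ker_unitsMap ((Nat.gcd_dvd_left c d).trans hcq)]
  rw [factorsThrough_iff_ker_unitsMap hcq] at hc
  rw [factorsThrough_iff_ker_unitsMap hdq] at hd
  intro u hu
  rw [MonoidHom.mem_ker] at hu
  obtain ⟨v, w, rfl, hv, hw⟩ := split_general hcq hdq u hu
  rw [MonoidHom.mem_ker, map_mul]
  have h5 : v ∈ (ZMod.unitsMap hcq).ker := hv
  have h6 : w ∈ (ZMod.unitsMap hdq).ker := hw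
  rw [hc h5, hd h6, one_mul]

lemma conductor_dvd_of_factorsThrough {q : ℕ} [NeZero q] {χ : DirichletCharacter ℂ q} {d : ℕ}
    (h : χ.FactorsThrough d) : χ.conductor ∣ d := by
  have h1 : χ.FactorsThrough (Nat.gcd χ.conductor d) :=
    factorsThrough_gcd (factorsThrough_conductor χ) h
  have h2 : χ.conductor ≤ Nat.gcd χ.conductor d := Nat.sInf_le h1
  have h3 : Nat.gcd χ.conductor d ≤ χ.conductor :=
    Nat.le_of_dvd (Nat.pos_of_ne_zero (conductor_ne_zero χ))
      (Nat.gcd_dvd_left _ _)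
  have h4 : Nat.gcd χ.conductor d = χ.conductor := le_antisymm h3 h2
  rw [← h4]
  exact Nat.gcd_dvd_right _ _

lemma conductor_changeLevel_of_isPrimitive {d q : ℕ} [NeZero q] (hdq : d ∣ q)
    {ψ : DirichletCharacter ℂ d} (hψ : ψ.IsPrimitive) :
    (changeLevel hdq ψ).conductor = d := by
  have hd0 : d ≠ 0 := fun h => NeZero.ne q (Nat.eq_zero_of_zero_dvd (h ▸ hdq))
  have hcd : (changeLevel hdq ψ).conductor ∣ d :=
    conductor_dvd_of_factorsThrough ⟨hdq, ψ, rfl⟩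
  obtain ⟨hdvd, χ₀, hχ₀⟩ := factorsThrough_conductor (changeLevel hdq ψ)
  have heq : changeLevel hdq ψ = changeLevel hdq (changeLevel hcd χ₀) := by
    rw [← changeLevel_trans _ hcd hdq]
    exact hχ₀
  have hψ' : ψ = changeLevel hcd χ₀ := changeLevel_injective hdq heq
  have hft : ψ.FactorsThrough (changeLevel hdq ψ).conductor := ⟨hcd, χ₀, hψ'⟩
  have h1 : d ≤ (changeLevel hdq ψ).conductor := by
    have h2 : ψ.conductor ≤ (changeLevel hdq ψ).conductor := Nat.sInf_le hft
    rwa [hψ] at h2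
  exact le_antisymm (Nat.le_of_dvd (Nat.pos_of_ne_zero hd0) hcd) h1

open scoped Classical in
lemma sum_all_eq (n : ℕ) (hn : n ≠ 0) (b : ℤ) (hb : IsUnit ((b : ℤ) : ZMod n)) :
    ∑ χ : DirichletCharacter ℂ n, χ ((b : ZMod n)) =
      ∑ d ∈ n.divisors, ∑ ψ : DirichletCharacter ℂ d,
        (if ψ.IsPrimitive then ψ ((b : ZMod d)) else 0) := by
  haveI : NeZero n := ⟨hn⟩
  have hmap : ∀ χ ∈ (Finset.univ : Finset (DirichletCharacter ℂ n)),
      χ.conductor ∈ n.divisors :=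
    fun χ _ => Nat.mem_divisors.mpr ⟨conductor_dvd_level χ, hn⟩
  rw [← Finset.sum_fiberwise_of_maps_to hmap (fun χ => χ ((b : ZMod n)))]
  refine Finset.sum_congr rfl (fun d hd => ?_)
  obtain ⟨hdn, -⟩ := Nat.mem_divisors.mp hd
  rw [← Finset.sum_filter]
  refine (Finset.sum_bij (fun ψ _ => changeLevel hdn ψ) ?_ ?_ ?_ ?_).symm
  · intro ψ hψ
    simp only [Finset.mem_filter, Finset.mem_univ, true_and] at hψ ⊢
    exact conductor_changeLevel_of_isPrimitive hdn hψ
  · intro ψ₁ h₁ ψ₂ h₂ h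
    exact changeLevel_injective hdn h
  · intro χ hχ
    have hcond : χ.conductor = d := (Finset.mem_filter.mp hχ).2
    subst hcond
    refine ⟨χ.primitiveCharacter, ?_, ?_⟩
    · simp only [Finset.mem_filter, Finset.mem_univ, true_and]
      exact primitiveCharacter_isPrimitive χ
    · exact (Classical.choose_spec (factorsThrough_conductor χ).choose_spec).symm
  · intro ψ hψ
    have h1 : ((b : ZMod n)) = (hb.unit : ZMod n) := (IsUnit.unit_spec hb).symm
    rw [h1, changeLevel_eq_cast_of_dvd]
    congr 1
    have h2 : (ZMod.castHom hdn (ZMod d)) ((b : ZMod n)) = ((b : ZMod d)) :=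
      map_intCast _ b
    rw [ZMod.castHom_apply, h1] at h2
    exact h2.symm

theorem stmt_5 (q : ℕ) (hq : 1 < q) (a : ℤ) (ha : Int.gcd a q = 1) :
    (∑ χ : DirichletCharacter ℂ q, if χ.IsPrimitive then χ (a : ZMod q) else 0)
      = ((∑ c ∈ Nat.divisors (Int.gcd ((q : ℤ)) (a - 1)),
          (ArithmeticFunction.moebius (q / c) : ℤ) * (Nat.totient c : ℤ) : ℤ) : ℂ) := by
  haveI : NeZero q := ⟨by omega⟩
  have hq0 : q ≠ 0 := by omega
  have hunit : ∀ n : ℕ, n ∣ q → IsUnit ((a : ℤ) : ZMod n) := by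
    intro n hn
    have h1 : Int.gcd a n ∣ Int.gcd a q :=
      Nat.dvd_gcd (Nat.gcd_dvd_left _ _)
        ((Nat.gcd_dvd_right _ _).trans (by simpa using hn))
    rw [ha, Nat.dvd_one] at h1
    obtain ⟨p, r, hpr⟩ := Int.isCoprime_iff_gcd_eq_one.mpr h1
    refine IsUnit.of_mul_eq_one ((p : ZMod n)) ?_
    have h3 := congrArg (Int.cast : ℤ → ZMod n) hpr
    push_cast at h3
    rwa [ZMod.natCast_self, mul_zero, add_zero, mul_comm] at h3
  set f : ℕ → ℂ := fun n =>
    ∑ ψ : DirichletCharacter ℂ n, if ψ.IsPrimitive then ψ ((a : ZMod n)) else 0 with hfdef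
  set g : ℕ → ℂ := fun n => if ((a : ℤ) : ZMod n) = 1 then (n.totient : ℂ) else 0 with hgdef
  have hfg : ∀ n > 0, n ∈ {m : ℕ | m ∣ q} → ∑ i ∈ n.divisors, f i = g n := by
    intro n hn hnq
    haveI : NeZero n := ⟨hn.ne'⟩
    haveI : NeZero (Monoid.exponent (ZMod n)ˣ) := ⟨Monoid.exponent_ne_zero_of_finite⟩
    rw [← sum_all_eq n hn.ne' a (hunit n hnq)]
    exact DirichletCharacter.sum_characters_eq ℂ _
  have hinv := (ArithmeticFunction.sum_eq_iff_sum_mul_moebius_eq_on {m : ℕ | m ∣ q}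
    (fun m n hmn hn => hmn.trans hn)).mp hfg q (by omega) (dvd_refl q)
  rw [Nat.sum_divisorsAntidiagonal'
    (f := fun x y => (ArithmeticFunction.moebius x : ℂ) * g y)] at hinv
  rw [show (∑ χ : DirichletCharacter ℂ q, if χ.IsPrimitive then χ (a : ZMod q) else 0) = f q
    from rfl, ← hinv]
  have hcondeq : ∀ d : ℕ, (((a : ℤ) : ZMod d) = 1) ↔ ((d : ℤ) ∣ a - 1) := by
    intro d
    rw [← ZMod.intCast_zmod_eq_zero_iff_dvd, Int.cast_sub, Int.cast_one, sub_eq_zero]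
  have hstep : ∀ d ∈ q.divisors, (ArithmeticFunction.moebius (q / d) : ℂ) * g d
      = if (d : ℤ) ∣ a - 1 then (ArithmeticFunction.moebius (q / d) : ℂ) * (d.totient : ℂ)
        else 0 := by
    intro d _
    rw [hgdef]
    simp only [← hcondeq d]
    split_ifs <;> simp
  rw [Finset.sum_congr rfl hstep, ← Finset.sum_filter]
  have hfilter : Finset.filter (fun d : ℕ => (d : ℤ) ∣ a - 1) q.divisors
      = (Int.gcd ((q : ℤ)) (a - 1)).divisors := by
    ext e
    simp only [Finset.mem_filter, Nat.mem_divisors]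
    constructor
    · rintro ⟨⟨heq, -⟩, hea⟩
      refine ⟨Int.dvd_gcd (Int.natCast_dvd_natCast.mpr heq) hea, ?_⟩
      intro h0
      rw [Int.gcd_eq_zero_iff] at h0
      exact hq0 (by exact_mod_cast h0.1)
    · rintro ⟨heg, -⟩
      have h1 : (e : ℤ) ∣ (Int.gcd ((q : ℤ)) (a - 1) : ℤ) := Int.natCast_dvd_natCast.mpr heg
      exact ⟨⟨Int.natCast_dvd_natCast.mp (h1.trans (Int.gcd_dvd_left _ _)), hq0⟩,
        h1.trans (Int.gcd_dvd_right _ _)⟩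
  rw [hfilter]
  push_cast
  rfl
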